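/- Under the assumptions M = η I_n and D = d I_n with η, d > 0, the trace of the asymptotic variance matrix of the frequency in the linearized stochastic swing system satisfies tr(Q_ω) = tr(B̃²)/(2dη), independently of the network Laplacian L. -/

import Mathlib

open Matrix

/-- With uniform inertia `M = ηI` and damping `D = dI`, the trace of the asymptotic
frequency variance matrix is `tr(B̃²)/(2dη)`, independently of the Laplacian `L`. -/
theorem stmt_7 (n : ℕ) (η d : ℝ) (hη : 0 < η) (hd : 0 < d)
    (b : Fin (n + 1) → ℝ) (hb : ∀ i, 0 < b i)
    (L U : Matrix (Fin (n + 1)) (Fin (n + 1)) ℝ) (hLsymm : L.IsSymm)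
    (hU1 : U * Uᵀ = 1) (hU2 : Uᵀ * U = 1)
    (lam : Fin (n + 1) → ℝ)
    (hdiag : Uᵀ * ((1 / η) • L) * U = Matrix.diagonal lam)
    (hlam0 : lam 0 = 0) (hlampos : ∀ i : Fin (n + 1), i ≠ 0 → 0 < lam i) :
    let α := d / η
    let W := Uᵀ * ((1 / η) • Matrix.diagonal fun i => (b i) ^ 2) * U
    let χ : Fin (n + 1) → Fin (n + 1) → ℝ :=
      fun i j => (lam i - lam j) ^ 2 + 2 * α ^ 2 * (lam i + lam j)
    let R : Matrix (Fin (n + 1)) (Fin (n + 1)) ℝ :=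
      Matrix.of fun i j =>
        if i = 0 ∧ j = 0 then W 0 0 / (2 * α)
        else (α * (lam i + lam j) / χ i j) * W i j
    let Qω := (1 / η) • (U * R * Uᵀ)
    Qω.trace = (∑ i, (b i) ^ 2) / (2 * d * η) := by
  intro α W χ R Qω
  have hα : 0 < α := div_pos hd hη
  have hηne : (η:ℝ) ≠ 0 := ne_of_gt hη
  have hRdiag : ∀ i, R i i = W i i / (2 * α) := by
    intro i
    by_cases h : i = 0
    · simp [R, h]
    · have hl := hlampos i h
      have hχ : χ i i = 4 * α ^ 2 * lam i := by simp only [χ]; ring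
      simp only [R, Matrix.of_apply, if_neg (by simp [h] : ¬(i = 0 ∧ i = 0)), hχ]
      have h1 : (4 : ℝ) * α ^ 2 * lam i ≠ 0 := by positivity
      field_simp
      ring
  have htrR : R.trace = W.trace / (2 * α) := by
    simp only [Matrix.trace, Matrix.diag]
    rw [Finset.sum_div]
    exact Finset.sum_congr rfl fun i _ => hRdiag i
  have htrW : W.trace = (∑ i, (b i) ^ 2) / η := by
    have : W.trace = (U * Uᵀ * ((1 / η) • Matrix.diagonal fun i => (b i) ^ 2)).trace := by
      rw [Matrix.trace_mul_cycle]
    rw [this, hU1, one_mul, Matrix.trace_smul, Matrix.trace_diagonal]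
    simp [div_eq_inv_mul, Finset.mul_sum]
  have hQ : Qω.trace = (1 / η) * R.trace := by
    show ((1 / η) • (U * R * Uᵀ)).trace = _
    rw [Matrix.trace_smul, Matrix.trace_mul_cycle, hU2, one_mul]
    simp
  rw [hQ, htrR, htrW]
  have hdne : (d:ℝ) ≠ 0 := ne_of_gt hd
  have : α = d / η := rfl
  rw [this]
  field_simp
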